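/- arXiv:1002.4451 — 4 statements merged into one kernel-verified Lean document; each statement's English description precedes it below -/
import Mathlib

section
/- Let E be a finite-dimensional real inner product space and let w : ι → E be a finite family of vectors such that for every vector v ∈ E the sum of those w i with ⟨w i, v⟩ > 0 equals zero (i.e., ∑_{i : ⟨w i, v⟩ > 0} w i = 0). Then w i = 0 for every i. -/
open Finset in
/-- If a finite family of vectors in a finite-dimensional real inner product space has
the property that for every vector `v` the sum of the members pairing strictly
positively with `v` vanishes, then all members of the family are zero. -/
theorem stmt1 {E : Type*} [NormedAddCommGroup E] [InnerProductSpace ℝ E]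
    [FiniteDimensional ℝ E] {ι : Type*} [Fintype ι] (w : ι → E)
    (h : ∀ v : E,
      ∑ i ∈ Finset.univ.filter (fun i => 0 < (inner ℝ (w i) v : ℝ)), w i = 0) :
    ∀ i, w i = 0 := by
  intro i
  by_contra hne
  have hv : 0 < (inner ℝ (w i) (w i) : ℝ) :=
    lt_of_le_of_ne real_inner_self_nonneg
      (fun heq => hne (real_inner_self_nonpos.mp heq.ge))
  have h0 := congrArg (fun x => (inner ℝ x (w i) : ℝ)) (h (w i))
  simp only [sum_inner, inner_zero_left] at h0
  have hpos : 0 < ∑ j ∈ Finset.univ.filter (fun j => 0 < (inner ℝ (w j) (w i) : ℝ)),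
      (inner ℝ (w j) (w i) : ℝ) :=
    Finset.sum_pos (fun j hj => (Finset.mem_filter.mp hj).2)
      ⟨i, Finset.mem_filter.mpr ⟨Finset.mem_univ i, hv⟩⟩
  linarith
end

section
/- Let n ≥ 1 and let Ω ⊆ ℝⁿ be a compact convex set with nonempty interior. Then there exists a constant c > 0 such that for every real r ≥ 1 and every ε with 0 < ε ≤ 1, the Lebesgue volume of the open ε-neighborhood of the topological boundary of the dilate r·Ω = {r·x : x ∈ Ω} is at most c·(ε/r) times the Lebesgue volume of r·Ω. -/
open scoped Pointwise
open MeasureTheory Metric Set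
open scoped ENNReal

/-- Membership in the homothety of `K` about `x₀` with ratio `a ≠ 0`. -/
lemma aux_mem_homothety {E : Type*} [NormedAddCommGroup E] [NormedSpace ℝ E]
    {K : Set E} {x₀ y : E} {a : ℝ} (ha : a ≠ 0) :
    y ∈ x₀ +ᵥ a • ((-x₀) +ᵥ K) ↔ x₀ + a⁻¹ • (y - x₀) ∈ K := by
  rw [mem_vadd_set_iff_neg_vadd_mem, Set.mem_smul_set_iff_inv_smul_mem₀ ha,
    mem_vadd_set_iff_neg_vadd_mem]
  simp only [vadd_eq_add, neg_neg, neg_add_eq_sub]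

/-- Outer inclusion: the `ε`-thickening of a convex set containing `ball x₀ δ` is
contained in the homothety about `x₀` of ratio `1 + ε/δ`. -/
lemma aux_outer {E : Type*} [NormedAddCommGroup E] [NormedSpace ℝ E]
    {K : Set E} (hK : Convex ℝ K) {x₀ : E} {δ ε : ℝ} (hδ : 0 < δ) (hε : 0 < ε)
    (hball : Metric.ball x₀ δ ⊆ K) :
    Metric.thickening ε K ⊆ x₀ +ᵥ (1 + ε / δ) • ((-x₀) +ᵥ K) := by
  intro y hy
  set t : ℝ := ε / δ with htdef
  have ht0 : 0 < t := div_pos hε hδ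
  have h1t : (0:ℝ) < 1 + t := by linarith
  obtain ⟨z, hz, hdz⟩ := Metric.mem_thickening_iff.1 hy
  have hb : x₀ + t⁻¹ • (y - z) ∈ K := by
    apply hball
    rw [Metric.mem_ball, dist_eq_norm]
    have : x₀ + t⁻¹ • (y - z) - x₀ = t⁻¹ • (y - z) := by abel
    rw [this, norm_smul, Real.norm_eq_abs, abs_of_pos (inv_pos.2 ht0)]
    rw [dist_eq_norm] at hdz
    calc t⁻¹ * ‖y - z‖ < t⁻¹ * ε := by
          exact mul_lt_mul_of_pos_left hdz (inv_pos.2 ht0)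
      _ = δ := by rw [htdef]; field_simp
  rw [aux_mem_homothety h1t.ne']
  have hcomb := hK hz hb (by positivity : (0:ℝ) ≤ (1+t)⁻¹)
    (by positivity : (0:ℝ) ≤ t * (1+t)⁻¹) (by field_simp)
  have : x₀ + (1 + t)⁻¹ • (y - x₀) =
      (1+t)⁻¹ • z + (t * (1+t)⁻¹) • (x₀ + t⁻¹ • (y - z)) := by
    match_scalars <;> field_simp <;> ring
  rw [this]
  exact hcomb

/-- Inner inclusion: points of the homothety of ratio `1 - t` are `t·δ`-interior. -/
lemma aux_inner {E : Type*} [NormedAddCommGroup E] [NormedSpace ℝ E]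
    {K : Set E} (hK : Convex ℝ K) {x₀ : E} {δ t : ℝ} (hδ : 0 < δ)
    (ht0 : 0 < t) (ht1 : t ≤ 1) (hball : Metric.ball x₀ δ ⊆ K)
    {y : E} (hy : y ∈ x₀ +ᵥ (1 - t) • ((-x₀) +ᵥ K)) :
    Metric.ball y (t * δ) ⊆ K := by
  obtain ⟨u, hu, rfl⟩ := hy
  obtain ⟨z, hz, rfl⟩ := hu
  obtain ⟨z, hz, rfl⟩ := hz
  intro p hp
  have hw : ‖t⁻¹ • (p - (x₀ +ᵥ (1 - t) • (-x₀ +ᵥ z)))‖ < δ := by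
    rw [norm_smul, Real.norm_eq_abs, abs_of_pos (inv_pos.2 ht0)]
    rw [Metric.mem_ball, dist_eq_norm] at hp
    calc t⁻¹ * ‖p - (x₀ +ᵥ (1 - t) • (-x₀ +ᵥ z))‖ < t⁻¹ * (t * δ) :=
          mul_lt_mul_of_pos_left hp (inv_pos.2 ht0)
      _ = δ := by field_simp
  have hb : x₀ + t⁻¹ • (p - (x₀ +ᵥ (1 - t) • (-x₀ +ᵥ z))) ∈ K := by
    apply hball
    rw [Metric.mem_ball, dist_eq_norm]
    simpa using hw
  have hcomb := hK hz hb (by linarith : (0:ℝ) ≤ 1 - t) ht0.le (by ring)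
  have : p = (1 - t) • z + t • (x₀ + t⁻¹ • (p - (x₀ +ᵥ (1 - t) • (-x₀ +ᵥ z)))) := by
    simp only [vadd_eq_add]
    match_scalars <;> field_simp <;> ring
  rw [this]
  exact hcomb

/-- `(1+t)^n ≤ 1 + (2^n - 1) t` for `t ∈ [0,1]`. -/
lemma aux_pow_le (n : ℕ) {t : ℝ} (ht0 : 0 ≤ t) (ht1 : t ≤ 1) :
    (1 + t) ^ n ≤ 1 + (2 ^ n - 1) * t := by
  induction n with
  | zero => simp
  | succ n ih =>
    have h2 : (1:ℝ) ≤ 2 ^ n := one_le_pow₀ (by norm_num)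
    calc (1 + t) ^ (n + 1) = (1 + t) ^ n * (1 + t) := by ring
      _ ≤ (1 + (2 ^ n - 1) * t) * (1 + t) := by
          apply mul_le_mul_of_nonneg_right ih (by linarith)
      _ ≤ 1 + (2 ^ (n + 1) - 1) * t := by
          have ht2 : t * t ≤ t := by nlinarith
          have h3 : (2:ℝ) ^ (n + 1) = 2 * 2 ^ n := by ring
          nlinarith [mul_le_mul_of_nonneg_left ht2 (by linarith : (0:ℝ) ≤ 2 ^ n - 1)]

/-- For a compact convex set `Ω ⊆ ℝⁿ` with nonempty interior there is `c > 0` such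
that for all `r ≥ 1` and `0 < ε ≤ 1`, the volume of the open `ε`-neighborhood of the
boundary of the dilate `r • Ω` is at most `c · (ε / r)` times the volume of `r • Ω`. -/
theorem stmt3 (n : ℕ) (hn : 1 ≤ n) (Ω : Set (EuclideanSpace ℝ (Fin n)))
    (hcomp : IsCompact Ω) (hconv : Convex ℝ Ω) (hint : (interior Ω).Nonempty) :
    ∃ c : ℝ, 0 < c ∧ ∀ r : ℝ, 1 ≤ r → ∀ ε : ℝ, 0 < ε → ε ≤ 1 →
      MeasureTheory.volume (Metric.thickening ε (frontier (r • Ω))) ≤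
        ENNReal.ofReal (c * (ε / r)) * MeasureTheory.volume (r • Ω) := by
  obtain ⟨x₀, hx₀⟩ := hint
  obtain ⟨δ, hδ, hballδ⟩ := Metric.isOpen_iff.1 isOpen_interior x₀ hx₀
  have hball : Metric.ball x₀ δ ⊆ Ω := hballδ.trans interior_subset
  set C : ℝ := (2 ^ n + n) + 2 ^ n * (1 + 1 / δ) ^ n with hCdef
  have hC : 0 < C := by positivity
  refine ⟨C / δ, div_pos hC hδ, ?_⟩
  intro r hr ε hε hε1
  have hr0 : (0:ℝ) < r := lt_of_lt_of_le one_pos hr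
  set K : Set (EuclideanSpace ℝ (Fin n)) := r • Ω with hKdef
  set x₁ : EuclideanSpace ℝ (Fin n) := r • x₀ with hx₁def
  set t : ℝ := ε / (r * δ) with htdef
  have ht0 : 0 < t := div_pos hε (by positivity)
  have hKconv : Convex ℝ K := hconv.smul r
  have hKcomp : IsCompact K := hcomp.smul r
  have hKball : Metric.ball x₁ (r * δ) ⊆ K := by
    have := smul_ball hr0.ne' x₀ δ
    rw [Real.norm_eq_abs, abs_of_pos hr0] at this
    rw [hx₁def, ← this]
    exact Set.smul_set_mono hball
  have htε : t = ε / (r * δ) := rfl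
  have hεt : ε = t * (r * δ) := by rw [htdef]; field_simp
  -- outer set and its volume
  have houter : Metric.thickening ε (frontier K) ⊆ x₁ +ᵥ (1 + t) • ((-x₁) +ᵥ K) := by
    have h1 : Metric.thickening ε (frontier K) ⊆ Metric.thickening ε K :=
      Metric.thickening_subset_of_subset ε hKcomp.isClosed.frontier_subset
    have h2 := aux_outer hKconv (mul_pos hr0 hδ) hε hKball
    rw [← htε] at h2
    exact h1.trans h2
  have hVfin : MeasureTheory.volume K ≠ ⊤ := hKcomp.measure_lt_top.ne
  have hdim : Module.finrank ℝ (EuclideanSpace ℝ (Fin n)) = n := finrank_euclideanSpace_fin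
  have hμhom : ∀ a : ℝ, 0 ≤ a → MeasureTheory.volume (x₁ +ᵥ a • ((-x₁) +ᵥ K)) =
      ENNReal.ofReal (a ^ n) * MeasureTheory.volume K := by
    intro a ha
    rw [measure_vadd, Measure.addHaar_smul_of_nonneg _ ha, hdim, measure_vadd]
  have hx₁K : x₁ ∈ K := hKball (Metric.mem_ball_self (by positivity))
  -- the final reduction from a real bound `(…) ≤ C * t`
  have key : ∀ V : ℝ≥0∞, V ≤ ENNReal.ofReal (C * t) * MeasureTheory.volume K →
      V ≤ ENNReal.ofReal (C / δ * (ε / r)) * MeasureTheory.volume K := by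
    intro V hV
    have : C * t = C / δ * (ε / r) := by
      rw [htdef]; field_simp
    rwa [this] at hV
  by_cases hcase : t ≤ 1
  · -- inner set
    set I : Set (EuclideanSpace ℝ (Fin n)) := x₁ +ᵥ (1 - t) • ((-x₁) +ᵥ K) with hIdef
    have hIK : I ⊆ K := by
      rintro y ⟨u, ⟨z, ⟨z, hz, rfl⟩, rfl⟩, rfl⟩
      have hcomb := hKconv hz hx₁K (by linarith : (0:ℝ) ≤ 1 - t) ht0.le (by ring)
      have : (x₁ : EuclideanSpace ℝ (Fin n)) +ᵥ (1 - t) • (-x₁ +ᵥ z) =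
          (1 - t) • z + t • x₁ := by
        simp only [vadd_eq_add]; module
      show x₁ +ᵥ (1 - t) • (-x₁ +ᵥ z) ∈ K
      rw [this]; exact hcomb
    have hIout : I ⊆ x₁ +ᵥ (1 + t) • ((-x₁) +ᵥ K) := by
      refine hIK.trans ?_
      refine (Metric.self_subset_thickening hε K).trans ?_
      have h2 := aux_outer hKconv (mul_pos hr0 hδ) hε hKball
      rwa [← htε] at h2
    have hdisj : Disjoint (Metric.thickening ε (frontier K)) I := by
      rw [Set.disjoint_right]
      intro y hy
      have hball' := aux_inner hKconv (mul_pos hr0 hδ) ht0 hcase hKball hy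
      rw [← hεt] at hball'
      intro hthick
      obtain ⟨p, hp, hdp⟩ := Metric.mem_thickening_iff.1 hthick
      have hpK : p ∈ interior K := by
        apply interior_maximal hball' Metric.isOpen_ball
        rw [Metric.mem_ball, dist_comm]
        exact hdp
      rw [frontier, Set.mem_diff] at hp
      exact hp.2 hpK
    have hImeas : MeasurableSet I := by
      have : IsCompact I := ((hKcomp.vadd (-x₁)).smul (1 - t)).vadd x₁
      exact this.isClosed.measurableSet
    have hadd : MeasureTheory.volume (Metric.thickening ε (frontier K)) +
        MeasureTheory.volume I ≤
        MeasureTheory.volume (x₁ +ᵥ (1 + t) • ((-x₁) +ᵥ K)) := by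
      rw [← measure_union hdisj.symm.symm hImeas]
      exact measure_mono (Set.union_subset houter hIout)
    have hIfin : MeasureTheory.volume I ≠ ⊤ := by
      rw [hIdef, hμhom (1 - t) (by linarith)]
      exact ENNReal.mul_ne_top ENNReal.ofReal_ne_top hVfin
    have hsub : MeasureTheory.volume (Metric.thickening ε (frontier K)) ≤
        MeasureTheory.volume (x₁ +ᵥ (1 + t) • ((-x₁) +ᵥ K)) - MeasureTheory.volume I :=
      ENNReal.le_sub_of_add_le_right hIfin hadd
    apply key _ (hsub.trans ?_)
    rw [hμhom (1 + t) (by linarith), hIdef, hμhom (1 - t) (by linarith),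
      ← ENNReal.sub_mul (fun _ _ => hVfin),
      ← ENNReal.ofReal_sub _ (pow_nonneg (by linarith) n)]
    apply mul_le_mul_left (ENNReal.ofReal_le_ofReal ?_)
    have h1 : (1 + t) ^ n ≤ 1 + (2 ^ n - 1) * t := aux_pow_le n ht0.le hcase
    have h2 : 1 - (n:ℝ) * t ≤ (1 - t) ^ n := by
      have := one_add_mul_le_pow (a := -t) (by linarith) n
      simpa [sub_eq_add_neg] using this
    have hCt : (2 ^ n + (n:ℝ)) * t ≤ C * t := by
      apply mul_le_mul_of_nonneg_right _ ht0.le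
      rw [hCdef]
      nlinarith [pow_pos (by positivity : (0:ℝ) < 1 + 1/δ) n, pow_pos (by norm_num : (0:ℝ) < 2) n]
    nlinarith
  · -- t > 1 : just use the outer set
    push_neg at hcase
    have hmono : MeasureTheory.volume (Metric.thickening ε (frontier K)) ≤
        MeasureTheory.volume (x₁ +ᵥ (1 + t) • ((-x₁) +ᵥ K)) := measure_mono houter
    apply key _ (hmono.trans ?_)
    rw [hμhom (1 + t) (by linarith)]
    apply mul_le_mul_left (ENNReal.ofReal_le_ofReal ?_)
    have htδ : t ≤ 1 / δ := by
      rw [htdef, div_le_div_iff₀ (by positivity) hδ]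
      calc ε * δ ≤ 1 * δ := by nlinarith
        _ ≤ 1 * (r * δ) := by nlinarith
    have h2n : (1 + t) ^ n ≤ 2 ^ n * t ^ n := by
      calc (1 + t) ^ n ≤ (t + t) ^ n := by
            apply pow_le_pow_left₀ (by linarith) (by linarith)
        _ = 2 ^ n * t ^ n := by rw [← mul_pow]; ring_nf
    have htn : t ^ n ≤ (1 + 1 / δ) ^ n * t := by
      have hbase : t ≤ 1 + 1 / δ := by
        have : (0:ℝ) ≤ 1 / δ := by positivity
        linarith
      calc t ^ n = t ^ (n - 1) * t := by
            rw [← pow_succ]; congr 1; omega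
        _ ≤ (1 + 1/δ) ^ (n-1) * t := by
            apply mul_le_mul_of_nonneg_right _ ht0.le
            exact pow_le_pow_left₀ ht0.le hbase _
        _ ≤ (1 + 1/δ) ^ n * t := by
            apply mul_le_mul_of_nonneg_right _ ht0.le
            have h1b : (1:ℝ) ≤ 1 + 1/δ := by
              have : (0:ℝ) ≤ 1/δ := by positivity
              linarith
            apply pow_le_pow_right₀ h1b (by omega)
    calc (1 + t) ^ n ≤ 2 ^ n * t ^ n := h2n
      _ ≤ 2 ^ n * ((1 + 1/δ) ^ n * t) := by
          apply mul_le_mul_of_nonneg_left htn (by positivity)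
      _ ≤ C * t := by
          have hexp : C * t = (2 ^ n + (n:ℝ)) * t + 2 ^ n * ((1 + 1/δ) ^ n * t) := by
            rw [hCdef]; ring
          have hpos : (0:ℝ) ≤ (2 ^ n + (n:ℝ)) * t :=
            mul_nonneg (by positivity) ht0.le
          linarith
end

section
/- Let A be a 3×3 matrix with integer entries and determinant 1, and suppose its characteristic polynomial, viewed over ℝ, factors as (X − λ)²·(X − μ) with λ, μ real and λ ≠ μ. Then λ = −1 and μ = 1. -/
open Polynomial in
/-- If an integer `3 × 3` matrix of determinant `1` has real characteristic polynomial
`(X − λ)² (X − μ)` with `λ ≠ μ` real, then `λ = −1` and `μ = 1`. -/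
theorem stmt6 (A : Matrix (Fin 3) (Fin 3) ℤ) (hdet : A.det = 1)
    (lam mu : ℝ) (hne : lam ≠ mu)
    (hchar : (A.map (Int.cast : ℤ → ℝ)).charpoly =
      (X - C lam) ^ 2 * (X - C mu)) :
    lam = -1 ∧ mu = 1 := by
  set p := A.charpoly with hp
  have hmap : p.map (Int.castRingHom ℝ) = (X - C lam) ^ 2 * (X - C mu) := by
    rw [← Matrix.charpoly_map, ← hchar]
    norm_cast
  set a : ℤ := p.coeff 2 with ha
  set b : ℤ := p.coeff 1 with hb
  have h0 : p.coeff 0 = -1 := by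
    have := Matrix.det_eq_sign_charpoly_coeff A
    rw [hdet] at this
    simp [Fintype.card_fin] at this
    linarith
  have hexp : (X - C lam) ^ 2 * (X - C mu) =
      X ^ 3 - C (2*lam+mu) * X ^ 2 + C (lam^2+2*lam*mu) * X - C (lam^2*mu) := by
    simp only [C_add, C_mul, map_ofNat, C_pow]
    ring
  rw [hexp] at hmap
  have key : ∀ k : ℕ, ((p.coeff k : ℝ)) =
      (X ^ 3 - C (2*lam+mu) * X ^ 2 + C (lam^2+2*lam*mu) * X - C (lam^2*mu)).coeff k := by
    intro k
    rw [← hmap, coeff_map]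
    rfl
  have E2 : (a : ℝ) = -(2*lam+mu) := by
    have := key 2
    simp only [coeff_add, coeff_sub, coeff_C_mul, coeff_X_pow, coeff_C, coeff_X] at this
    norm_num at this
    linarith
  have E1 : (b : ℝ) = lam^2+2*lam*mu := by
    have := key 1
    simp only [coeff_add, coeff_sub, coeff_C_mul, coeff_X_pow, coeff_C, coeff_X] at this
    norm_num at this
    linarith
  have E0 : lam^2*mu = 1 := by
    have := key 0
    rw [h0] at this
    simp only [coeff_add, coeff_sub, coeff_C_mul, coeff_X_pow, coeff_C, coeff_X] at this
    norm_num at this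
    linarith
  have eq1 : 3*lam^2 + 2*(a:ℝ)*lam + (b:ℝ) = 0 := by linear_combination E1 + 2*lam*E2
  have eq2 : 2*lam^3 + (a:ℝ)*lam^2 + 1 = 0 := by linear_combination -E0 + lam^2*E2
  have eq3 : (a:ℝ)*lam^2 + 2*(b:ℝ)*lam - 3 = 0 := by linear_combination 2*lam*eq1 - 3*eq2
  have eq4 : (6*(b:ℝ) - 2*(a:ℝ)^2)*lam = (a:ℝ)*(b:ℝ) + 9 := by
    linear_combination 3*eq3 - (a:ℝ)*eq1
  have hmuR : mu = -(a:ℝ) - 2*lam := by linarith [E2]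
  by_cases hd : 6*b - 2*a^2 = 0
  · have hd' : (6*(b:ℝ) - 2*(a:ℝ)^2) = 0 := by exact_mod_cast hd
    have habZ : a*b = -9 := by
      have h9 : (a:ℝ)*(b:ℝ) = -9 := by rw [hd'] at eq4; linarith
      exact_mod_cast h9
    have ha2 : a^2 = 3*b := by linarith
    have haa : a = -3 := by nlinarith [sq_nonneg (a+3), sq_nonneg (a-3), sq_nonneg a]
    have hbb : b = 3 := by nlinarith
    have hl : lam = 1 := by
      have h3 : 3*lam^2 - 6*lam + 3 = 0 := by
        have : ((a:ℤ):ℝ) = -3 := by exact_mod_cast congrArg (Int.cast : ℤ → ℝ) haa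
        have hb3 : ((b:ℤ):ℝ) = 3 := by exact_mod_cast congrArg (Int.cast : ℤ → ℝ) hbb
        nlinarith [eq1]
      nlinarith [sq_nonneg (lam - 1)]
    have hm : mu = 1 := by
      have : ((a:ℤ):ℝ) = -3 := by exact_mod_cast congrArg (Int.cast : ℤ → ℝ) haa
      rw [hmuR, hl, this]; ring
    exact absurd (hl.trans hm.symm) hne
  · have hdR : (6*(b:ℝ) - 2*(a:ℝ)^2) ≠ 0 := by
      intro h
      exact hd (by exact_mod_cast (show ((6*b - 2*a^2 : ℤ):ℝ) = 0 by push_cast; linarith))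
    set r : ℚ := (a*b+9)/(6*b-2*a^2) with hr
    have hrl : (r:ℝ) = lam := by
      rw [hr]
      push_cast
      field_simp
      rw [div_eq_iff (by contrapose! hdR; linarith)]
      linarith [eq4]
    have haevR : Polynomial.aeval lam p = 0 := by
      rw [Polynomial.aeval_def, ← Polynomial.eval_map]
      have : (algebraMap ℤ ℝ) = Int.castRingHom ℝ := rfl
      rw [this, hmap]
      simp
      ring
    have hev : Polynomial.aeval r p = 0 := by
      have h2 : Polynomial.aeval ((r:ℝ)) p = ((Polynomial.aeval r p : ℚ) : ℝ) := by
        have := Polynomial.aeval_algHom_apply ((algebraMap ℚ ℝ).toIntAlgHom) r p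
        simpa using this
      rw [hrl, haevR] at h2
      exact_mod_cast h2.symm
    obtain ⟨m, hm⟩ := isInteger_of_is_root_of_monic (A := ℤ) (K := ℚ)
      (Matrix.charpoly_monic A) hev
    have hlm : lam = (m:ℝ) := by
      rw [← hrl, ← hm]
      rfl
    have hZ : m^2 * (-a - 2*m) = 1 := by
      have : (m:ℝ)^2 * (-(a:ℝ) - 2*(m:ℝ)) = 1 := by
        rw [← hlm]
        calc lam^2 * (-(a:ℝ) - 2*lam) = lam^2 * mu := by rw [hmuR]
        _ = 1 := E0
      exact_mod_cast this
    have hu : m = 1 ∨ m = -1 := by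
      have : IsUnit m := IsUnit.of_mul_eq_one (a := m) (m*(-a-2*m)) (by linear_combination hZ)
      exact Int.isUnit_iff.mp this
    have hl2 : lam^2 = 1 := by
      rcases hu with h | h <;> rw [hlm, h] <;> norm_num
    have hmu1 : mu = 1 := by nlinarith [E0]
    rcases hu with h | h
    · exact absurd (show lam = mu by rw [hlm, h, hmu1]; norm_num) hne
    · exact ⟨by rw [hlm, h]; norm_num, hmu1⟩
end

section
/- Let E ⊆ ℝ be a set, let M > 0, and suppose that to every x ∈ E is assigned a closed interval I_x containing x with 0 < |I_x| ≤ M, where |I| denotes the length of I. Then there is a countable subset {x_k} of E such that the intervals I_{x_k} are pairwise strongly disjoint — meaning dist(I_{x_j}, I_{x_k}) ≥ (1/2)·max(|I_{x_j}|, |I_{x_k}|) for all j ≠ k — and ∑_k |I_{x_k}| ≥ (1/10)·μ*(E), where μ* denotes Lebesgue outer measure. -/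
open MeasureTheory Set

/-- Strongly-separated Vitali-type covering selection: if every point `x` of `E ⊆ ℝ`
lies in a closed interval `I_x = [a x, b x]` of positive length at most `M`, then one
can select a countable subset of `E` whose intervals are pairwise strongly disjoint
(any two are separated by at least half the larger length) and whose total length is
at least one tenth of the Lebesgue outer measure of `E`. -/
theorem stmt8 (E : Set ℝ) (M : ℝ) (hM : 0 < M) (a b : ℝ → ℝ)
    (hmem : ∀ x ∈ E, x ∈ Set.Icc (a x) (b x))
    (hlen : ∀ x ∈ E, 0 < b x - a x ∧ b x - a x ≤ M) :
    ∃ t : Set ℝ, t ⊆ E ∧ t.Countable ∧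
      (∀ x ∈ t, ∀ y ∈ t, x ≠ y →
        ∀ p ∈ Set.Icc (a x) (b x), ∀ q ∈ Set.Icc (a y) (b y),
          (1 / 2) * max (b x - a x) (b y - a y) ≤ |p - q|) ∧
      MeasureTheory.volume E / 10 ≤ ∑' x : t, ENNReal.ofReal (b x - a x) := by
  set L : ℝ → ℝ := fun x => b x - a x with hL
  set B : ℝ → Set ℝ := fun x => Set.Icc (a x - L x / 2) (b x + L x / 2) with hB
  obtain ⟨u, huE, hdisj, hcov⟩ :=
    Vitali.exists_disjoint_subfamily_covering_enlargement B E L 2 (by norm_num)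
      (fun x hx => (hlen x hx).1.le) M (fun x hx => (hlen x hx).2)
      (fun x hx => ⟨x, by
        have h1 := (hmem x hx).1
        have h2 := (hmem x hx).2
        have h3 := (hlen x hx).1
        constructor <;> simp only [hL] <;> linarith⟩)
  have hu_cnt : u.Countable := by
    apply hdisj.countable_of_nonempty_interior
    intro x hx
    have h3 := (hlen x (huE hx)).1
    have h1 := (hmem x (huE hx)).1
    rw [hB]
    simp only [interior_Icc, Set.nonempty_Ioo]
    simp only [hL]; linarith
  refine ⟨u, huE, hu_cnt, ?_, ?_⟩
  · -- separation
    have key : ∀ x ∈ u, ∀ y ∈ u, x ≠ y → ∀ p ∈ Set.Icc (a x) (b x),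
        ∀ q ∈ Set.Icc (a y) (b y), p ≤ q → (1/2) * max (L x) (L y) ≤ q - p := by
      intro x hx y hy hxy p hp q hq hpq
      have hd := hdisj hx hy hxy
      rw [Function.onFun, Set.disjoint_left] at hd
      by_contra hcon
      push_neg at hcon
      have hLx := (hlen x (huE hx)).1
      have hLy := (hlen y (huE hy)).1
      have hmax : max (L x) (L y) ≥ L x ∧ max (L x) (L y) ≥ L y :=
        ⟨le_max_left _ _, le_max_right _ _⟩
      have hsum : q - p < L x / 2 + L y / 2 := by
        rcases max_cases (L x) (L y) with ⟨h, h'⟩ | ⟨h, h'⟩ <;> rw [h] at hcon <;> linarith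
      set z := min (p + L x / 2) q with hz
      have hzB : z ∈ B x := by
        constructor
        · have : p ≤ z := le_min (by linarith) hpq
          simp only [hL]; linarith [hp.1, hp.2]
        · have : z ≤ p + L x / 2 := min_le_left _ _
          simp only [hL]; linarith [hp.1, hp.2]
      have hzB' : z ∈ B y := by
        constructor
        · have : q - L y / 2 ≤ z := by
            rcases min_cases (p + L x / 2) q with ⟨h, h'⟩ | ⟨h, h'⟩ <;> rw [hz, h] <;> linarith
          simp only [hL]; linarith [hq.1, hq.2]
        · have : z ≤ q := min_le_right _ _
          simp only [hL]; linarith [hq.1, hq.2]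
      exact hd hzB hzB'
    intro x hx y hy hxy p hp q hq
    rcases le_total p q with h | h
    · rw [abs_sub_comm, abs_of_nonneg (by linarith)]
      exact key x hx y hy hxy p hp q hq h
    · rw [abs_of_nonneg (by linarith), max_comm]
      exact key y hy x hx (Ne.symm hxy) q hq p hp h
  · -- measure
    have hsub : E ⊆ ⋃ y ∈ u, Set.Icc (a y - 9/2 * L y) (b y + 9/2 * L y) := by
      intro x hx
      obtain ⟨y, hy, ⟨z, hzx, hzy⟩, hLle⟩ := hcov x hx
      refine Set.mem_iUnion₂.2 ⟨y, hy, ?_⟩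
      have hx1 := (hmem x hx).1
      have hx2 := (hmem x hx).2
      have hLx := (hlen x hx).1
      have hLy := (hlen y (huE hy)).1
      obtain ⟨hz1, hz2⟩ := hzx
      obtain ⟨hz3, hz4⟩ := hzy
      constructor <;> simp only [hL] at * <;> linarith
    have hmeas : MeasureTheory.volume E ≤ ∑' y : u, (10 : ENNReal) * ENNReal.ofReal (L y) := by
      calc MeasureTheory.volume E
          ≤ MeasureTheory.volume (⋃ y ∈ u, Set.Icc (a y - 9/2 * L y) (b y + 9/2 * L y)) :=
            measure_mono hsub
        _ ≤ ∑' y : u, MeasureTheory.volume (Set.Icc (a (y:ℝ) - 9/2 * L y) (b (y:ℝ) + 9/2 * L y)) :=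
            measure_biUnion_le _ hu_cnt _
        _ = ∑' y : u, (10 : ENNReal) * ENNReal.ofReal (L y) := by
            refine tsum_congr fun y => ?_
            rw [Real.volume_Icc, ← ENNReal.ofReal_ofNat, ← ENNReal.ofReal_mul (by norm_num)]
            congr 1
            simp only [hL]; ring
    rw [ENNReal.tsum_mul_left] at hmeas
    rw [ENNReal.div_le_iff (by norm_num) (by norm_num)]
    rwa [mul_comm] at hmeas
end
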